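/- Let F(x) = ₂F₁(a,b;a+b;x) with a,b ∈ (0,1]. Then 1/F is concave on (0,1); in particular F((x+y)/2) ≤ 2F(x)F(y)/(F(x)+F(y)) for all x,y ∈ (0,1), with equality iff x = y. -/

import Mathlib

/-- The rising factorial (Pochhammer symbol) `(a)ₙ = a(a+1)⋯(a+n−1)`. -/
def ascFac (a : ℝ) : ℕ → ℝ
  | 0 => 1
  | n + 1 => ascFac a n * (a + n)

/-- The Gaussian hypergeometric function `₂F₁(a,b;c;x) = Σ (a)ₙ(b)ₙ/((c)ₙ n!) xⁿ`. -/
noncomputable def hyperF (a b c x : ℝ) : ℝ :=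
  ∑' n : ℕ, ascFac a n * ascFac b n / (ascFac c n * n.factorial) * x ^ n

open Finset Set

/-! ### Coefficients of the hypergeometric series -/

noncomputable def coA (a b : ℝ) (n : ℕ) : ℝ :=
  ascFac a n * ascFac b n / (ascFac (a + b) n * n.factorial)

noncomputable def rho (a b : ℝ) (n : ℕ) : ℝ :=
  ((a + n) * (b + n)) / (((a + b) + n) * (n + 1))

section Dev
variable {a b : ℝ}
variable (ha : 0 < a) (hb : 0 < b) (ha1 : a ≤ 1) (hb1 : b ≤ 1)

theorem ascFac_pos (h : 0 < a) : ∀ n, 0 < ascFac a n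
  | 0 => one_pos
  | n + 1 => by
      have h2 : (0:ℝ) < a + n := by positivity
      simp only [ascFac]
      exact mul_pos (ascFac_pos h n) h2

theorem coA_zero : coA a b 0 = 1 := by simp [coA, ascFac]

include ha hb in
theorem coA_succ (n : ℕ) : coA a b (n + 1) = coA a b n * rho a b n := by
  have h1 := ascFac_pos ha n
  have h2 := ascFac_pos hb n
  have h3 := ascFac_pos (by linarith : (0:ℝ) < a + b) n
  have h4 : (0:ℝ) < (n.factorial : ℝ) := by positivity
  have h5 : (0:ℝ) < (a + b) + n := by positivity
  have h6 : (0:ℝ) < (n:ℝ) + 1 := by positivity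
  simp only [coA, rho, ascFac, Nat.factorial_succ]
  push_cast
  field_simp

include ha hb in
theorem coA_pos (n : ℕ) : 0 < coA a b n := by
  have h1 := ascFac_pos ha n
  have h2 := ascFac_pos hb n
  have h3 := ascFac_pos (by linarith : (0:ℝ) < a + b) n
  have h4 : (0:ℝ) < (n.factorial : ℝ) := by positivity
  exact div_pos (mul_pos h1 h2) (mul_pos h3 h4)

include ha hb in
theorem rho_pos (n : ℕ) : 0 < rho a b n := by
  have h1 : (0:ℝ) < a + n := by positivity
  have h2 : (0:ℝ) < b + n := by positivity
  have h3 : (0:ℝ) < (a + b) + n := by positivity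
  have h4 : (0:ℝ) < (n:ℝ) + 1 := by positivity
  unfold rho; positivity

include ha hb hb1 in
theorem rho_le_one (n : ℕ) : rho a b n ≤ 1 := by
  have hn : (0:ℝ) ≤ (n:ℝ) := Nat.cast_nonneg n
  have h5 : (0:ℝ) < ((a + b) + n) * (n + 1) := by positivity
  rw [rho, div_le_one h5]
  nlinarith [mul_nonneg (le_of_lt ha) (sub_nonneg.mpr hb1)]

include ha hb ha1 hb1 in
theorem rho_step (n : ℕ) : rho a b n ≤ rho a b (n + 1) := by
  have hn : (0:ℝ) ≤ (n:ℝ) := Nat.cast_nonneg n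
  have h5 : (0:ℝ) < ((a + b) + n) * (n + 1) := by positivity
  have h6 : (0:ℝ) < ((a + b) + ((n:ℝ) + 1)) * ((n:ℝ) + 1 + 1) := by positivity
  rw [rho, rho]
  push_cast
  rw [div_le_div_iff₀ h5 h6]
  nlinarith [mul_nonneg (mul_nonneg ha.le ha.le) (sub_nonneg.mpr hb1),
    mul_nonneg (mul_nonneg hb.le hb.le) (sub_nonneg.mpr ha1),
    mul_nonneg (mul_nonneg ha.le (sub_nonneg.mpr hb1)) hn, sq_nonneg (n:ℝ),
    mul_nonneg hb.le hn]

include ha hb ha1 hb1 in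
theorem rho_mono : Monotone (rho a b) :=
  monotone_nat_of_le_succ (fun n => rho_step ha hb ha1 hb1 n)

include ha hb ha1 hb1 in
theorem rho_strict : rho a b 0 < rho a b 1 := by
  have h5 : (0:ℝ) < ((a + b) + (0:ℝ)) * ((0:ℝ) + 1) := by positivity
  have h6 : (0:ℝ) < ((a + b) + (1:ℝ)) * ((1:ℝ) + 1) := by positivity
  rw [rho, rho]
  push_cast
  rw [div_lt_div_iff₀ h5 h6]
  nlinarith [mul_pos ha hb, mul_nonneg (mul_nonneg ha.le ha.le) (sub_nonneg.mpr hb1),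
    mul_nonneg (mul_nonneg hb.le hb.le) (sub_nonneg.mpr ha1)]

include ha hb ha1 hb1 in
theorem coA_antitone : Antitone (coA a b) := by
  apply antitone_nat_of_succ_le
  intro n
  rw [coA_succ ha hb n]
  calc coA a b n * rho a b n ≤ coA a b n * 1 :=
        mul_le_mul_of_nonneg_left (rho_le_one ha hb hb1 n) (coA_pos ha hb n).le
    _ = coA a b n := mul_one _

include ha hb ha1 hb1 in
theorem coA_le_one (n : ℕ) : coA a b n ≤ 1 := by
  have h := coA_antitone ha hb ha1 hb1 (Nat.zero_le n)
  rwa [coA_zero] at h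

end Dev

/-! ### Reciprocal power series coefficients and Kaluza's theorem -/

noncomputable def fser (A : ℕ → ℝ) : PowerSeries ℝ := PowerSeries.mk A
noncomputable def eco (A : ℕ → ℝ) (n : ℕ) : ℝ := PowerSeries.coeff n (fser A)⁻¹

theorem conv (A : ℕ → ℝ) (h0 : A 0 = 1) (n : ℕ) :
    ∑ k ∈ range (n + 1), A k * eco A (n - k) = if n = 0 then 1 else 0 := by
  have hc : PowerSeries.constantCoeff (fser A) ≠ 0 := by
    simp [fser, ← PowerSeries.coeff_zero_eq_constantCoeff, h0]
  have h2 := congrArg (PowerSeries.coeff n) (PowerSeries.mul_inv_cancel (fser A) hc)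
  rw [PowerSeries.coeff_mul, PowerSeries.coeff_one,
    Finset.Nat.sum_antidiagonal_eq_sum_range_succ_mk] at h2
  simpa [fser, eco] using h2

theorem eco_zero (A : ℕ → ℝ) (h0 : A 0 = 1) : eco A 0 = 1 := by
  simpa [h0] using conv A h0 0

theorem eco_one (A : ℕ → ℝ) (h0 : A 0 = 1) : eco A 1 = -A 1 := by
  have h := conv A h0 1
  rw [sum_range_succ, sum_range_succ] at h
  simp [h0, eco_zero A h0] at h
  linarith

section Kaluza
variable {A ρ : ℕ → ℝ} (h0 : A 0 = 1) (hpos : ∀ n, 0 < A n)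
  (hrec : ∀ n, A (n + 1) = A n * ρ n) (hmono : Monotone ρ)

include h0 hpos hrec hmono in
theorem kaluza : ∀ n, 1 ≤ n → eco A n ≤ 0 := by
  intro n
  induction n using Nat.strong_induction_on with
  | _ n ih =>
    intro hn
    obtain _ | N := n
    · omega
    obtain _ | m := N
    · rw [eco_one A h0]; linarith [hpos 1]
    set N := m + 1 with hN
    have hconv1 := conv A h0 (N + 1)
    have hconv0 := conv A h0 N
    rw [if_neg (by omega)] at hconv1 hconv0
    rw [Finset.sum_range_succ'] at hconv1
    simp only [Nat.succ_sub_succ, Nat.sub_zero, h0, one_mul] at hconv1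
    have h1 : ∑ i ∈ range (N + 1), A (i + 1) * eco A (N - i)
        = ∑ i ∈ range (N + 1), (A (i + 1) - A i * ρ N) * eco A (N - i)
          + ρ N * ∑ k ∈ range (N + 1), A k * eco A (N - k) := by
      rw [Finset.mul_sum, ← Finset.sum_add_distrib]
      exact Finset.sum_congr rfl (fun i _ => by ring)
    rw [hconv0, mul_zero, add_zero] at h1
    have h2 : 0 ≤ ∑ i ∈ range (N + 1), (A (i + 1) - A i * ρ N) * eco A (N - i) := by
      apply Finset.sum_nonneg
      intro i hi
      have hi' : i ≤ N := by simpa [Nat.lt_succ_iff] using hi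
      rcases eq_or_lt_of_le hi' with heq | hlt
      · rw [heq, hrec N]; simp
      · have hc : A (i + 1) - A i * ρ N ≤ 0 := by
          rw [hrec i]
          have := hmono (le_of_lt hlt)
          nlinarith [hpos i]
        have he : eco A (N - i) ≤ 0 := ih (N - i) (by omega) (by omega)
        nlinarith
    linarith

include h0 hpos hrec hmono in
theorem eco_bound : ∀ n, 1 ≤ n → -eco A n ≤ A n := by
  intro n hn
  obtain _ | N := n
  · omega
  have hconv := conv A h0 (N + 1)
  rw [if_neg (by omega), Finset.sum_range_succ'] at hconv
  simp only [Nat.succ_sub_succ, Nat.sub_zero, h0, one_mul] at hconv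
  rw [Finset.sum_range_succ, Nat.sub_self, eco_zero A h0, mul_one] at hconv
  have h2 : ∑ i ∈ range N, A (i + 1) * eco A (N - i) ≤ 0 := by
    apply Finset.sum_nonpos
    intro i hi
    have hi' : i < N := mem_range.mp hi
    have he : eco A (N - i) ≤ 0 := kaluza h0 hpos hrec hmono (N - i) (by omega)
    exact mul_nonpos_of_nonneg_of_nonpos (hpos (i + 1)).le he
  linarith

include h0 in
theorem eco_two : eco A 2 = A 1 * A 1 - A 2 := by
  have h := conv A h0 2
  rw [if_neg (by omega), Finset.sum_range_succ, Finset.sum_range_succ,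
    Finset.sum_range_succ] at h
  simp only [Nat.sub_self, eco_zero A h0, Nat.zero_sub] at h
  rw [eco_one A h0, h0] at h
  norm_num at h
  linarith

end Kaluza

/-! ### Analytic lemmas -/

theorem summ_norm {c : ℕ → ℝ} (hc : ∀ n, |c n| ≤ 1) {x : ℝ} (hx : |x| < 1) :
    Summable (fun n => ‖c n * x ^ n‖) := by
  apply Summable.of_nonneg_of_le (fun n => norm_nonneg _) (fun n => ?_)
    (summable_geometric_of_lt_one (abs_nonneg x) hx)
  rw [norm_mul, norm_pow]
  calc ‖c n‖ * ‖x‖ ^ n ≤ 1 * ‖x‖ ^ n := by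
        apply mul_le_mul_of_nonneg_right (hc n) (by positivity)
    _ = |x| ^ n := by rw [one_mul]; norm_num

theorem summ {c : ℕ → ℝ} (hc : ∀ n, |c n| ≤ 1) {x : ℝ} (hx : |x| < 1) :
    Summable (fun n => c n * x ^ n) := (summ_norm hc hx).of_norm

theorem prod_one {A : ℕ → ℝ} (h0 : A 0 = 1) (hA : ∀ n, |A n| ≤ 1)
    (hE : ∀ n, |eco A n| ≤ 1) {x : ℝ} (hx : |x| < 1) :
    (∑' n, A n * x ^ n) * (∑' n, eco A n * x ^ n) = 1 := by
  rw [tsum_mul_tsum_eq_tsum_sum_antidiagonal_of_summable_norm (summ_norm hA hx)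
    (summ_norm hE hx)]
  have key : ∀ n : ℕ, ∑ kl ∈ antidiagonal n, (A kl.1 * x ^ kl.1) * (eco A kl.2 * x ^ kl.2)
      = (if n = 0 then 1 else 0) * x ^ n := by
    intro n
    rw [Finset.Nat.sum_antidiagonal_eq_sum_range_succ_mk]
    have h1 : ∀ k ∈ range (n + 1),
        A k * x ^ k * (eco A (n - k) * x ^ (n - k)) = (A k * eco A (n - k)) * x ^ n := by
      intro k hk
      have hk' : k + (n - k) = n := by
        have := mem_range.mp hk; omega
      rw [show A k * x ^ k * (eco A (n - k) * x ^ (n - k))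
          = (A k * eco A (n - k)) * (x ^ k * x ^ (n - k)) by ring, ← pow_add, hk']
    rw [sum_congr rfl h1, ← Finset.sum_mul, conv A h0 n]
  rw [tsum_congr key, tsum_eq_single 0 (fun n hn => by simp [hn])]
  simp

theorem concaveOn_series {d : ℕ → ℝ} (hd1 : ∀ n, |d n| ≤ 1) (hd : ∀ n, 2 ≤ n → d n ≤ 0) :
    ConcaveOn ℝ (Set.Ioo (0:ℝ) 1) (fun x => ∑' n, d n * x ^ n) := by
  refine ⟨convex_Ioo 0 1, fun x hx y hy p q hp hq hpq => ?_⟩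
  simp only [smul_eq_mul]
  have absx : |x| < 1 := by rw [abs_lt]; exact ⟨by linarith [hx.1], hx.2⟩
  have absy : |y| < 1 := by rw [abs_lt]; exact ⟨by linarith [hy.1], hy.2⟩
  have hz : p * x + q * y ∈ Set.Ioo (0:ℝ) 1 := by
    have := (convex_Ioo (0:ℝ) 1) hx hy hp hq hpq
    simpa using this
  have absz : |p * x + q * y| < 1 := by rw [abs_lt]; exact ⟨by linarith [hz.1], hz.2⟩
  have hterm : ∀ n : ℕ, p * (d n * x ^ n) + q * (d n * y ^ n)
      ≤ d n * (p * x + q * y) ^ n := by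
    intro n
    match n with
    | 0 => simp only [pow_zero, mul_one]; exact le_of_eq (by linear_combination d 0 * hpq)
    | 1 => simp only [pow_one]; exact le_of_eq (by ring)
    | (k+2) =>
      have hdn : d (k+2) ≤ 0 := hd (k+2) (by omega)
      have hcv := (convexOn_pow (k+2)).2 (mem_Ici.mpr hx.1.le) (mem_Ici.mpr hy.1.le)
        hp hq hpq
      simp only [smul_eq_mul] at hcv
      have := mul_le_mul_of_nonpos_left hcv hdn
      nlinarith [this]
  calc p * (∑' n, d n * x ^ n) + q * (∑' n, d n * y ^ n)
      = ∑' n, (p * (d n * x ^ n) + q * (d n * y ^ n)) := by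
        rw [Summable.tsum_add ((summ hd1 absx).mul_left p) ((summ hd1 absy).mul_left q),
          tsum_mul_left, tsum_mul_left]
    _ ≤ ∑' n, d n * (p * x + q * y) ^ n := by
        apply Summable.tsum_le_tsum hterm
          (((summ hd1 absx).mul_left p).add ((summ hd1 absy).mul_left q))
          (summ hd1 absz)

theorem strictConcaveOn_congr {s : Set ℝ} {f g : ℝ → ℝ} (hf : StrictConcaveOn ℝ s f)
    (h : ∀ x ∈ s, f x = g x) : StrictConcaveOn ℝ s g := by
  refine ⟨hf.1, fun x hx y hy hne p q hp hq hpq => ?_⟩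
  rw [← h x hx, ← h y hy, ← h _ (hf.1 hx hy hp.le hq.le hpq)]
  exact hf.2 hx hy hne hp hq hpq

theorem sq_strictConcave {C : ℝ} (hC : C < 0) :
    StrictConcaveOn ℝ (Set.Ioo (0:ℝ) 1) (fun x => C * x ^ 2) := by
  refine ⟨convex_Ioo 0 1, fun x _ y _ hne p q hp hq hpq => ?_⟩
  simp only [smul_eq_mul]
  have hxy : x - y ≠ 0 := sub_ne_zero.mpr hne
  have h1 : (0:ℝ) < (x - y) ^ 2 := by positivity
  have hq' : q = 1 - p := by linarith
  subst hq'
  nlinarith [mul_pos (mul_pos hp hq) h1, mul_pos hp hq]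

theorem split_tsum {e : ℕ → ℝ} (he : ∀ n, |e n| ≤ 1) {x : ℝ} (hx : |x| < 1) :
    ∑' n, e n * x ^ n
      = e 2 * x ^ 2 + ∑' n, (if n = 2 then 0 else e n) * x ^ n := by
  have hd1 : ∀ n, |if n = 2 then (0:ℝ) else e n| ≤ 1 := by
    intro n; split
    · simp
    · exact he n
  have h1 : Summable (fun n : ℕ => if n = 2 then e 2 * x ^ 2 else 0) := by
    apply summable_of_ne_finset_zero (s := {2})
    intro n hn
    simp only [Finset.mem_singleton] at hn
    simp [hn]
  calc ∑' n, e n * x ^ n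
      = ∑' n, ((if n = 2 then e 2 * x ^ 2 else 0) + (if n = 2 then 0 else e n) * x ^ n) :=
        tsum_congr (fun n => by by_cases h : n = 2 <;> simp [h])
    _ = (∑' n : ℕ, if n = 2 then e 2 * x ^ 2 else 0)
        + ∑' n, (if n = 2 then 0 else e n) * x ^ n := Summable.tsum_add h1 (summ hd1 hx)
    _ = e 2 * x ^ 2 + ∑' n, (if n = 2 then 0 else e n) * x ^ n := by
        rw [tsum_eq_single 2 (fun n hn => by simp [hn])]
        simp

theorem strict_E {e : ℕ → ℝ} (he1 : ∀ n, |e n| ≤ 1) (henp : ∀ n, 2 ≤ n → e n ≤ 0)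
    (he2 : e 2 < 0) :
    StrictConcaveOn ℝ (Set.Ioo (0:ℝ) 1) (fun x => ∑' n, e n * x ^ n) := by
  have hd1 : ∀ n, |if n = 2 then (0:ℝ) else e n| ≤ 1 := by
    intro n; split
    · simp
    · exact he1 n
  have hdnp : ∀ n, 2 ≤ n → (if n = 2 then (0:ℝ) else e n) ≤ 0 := by
    intro n hn; split
    · exact le_rfl
    · exact henp n hn
  have base := (sq_strictConcave he2).add_concaveOn (concaveOn_series hd1 hdnp)
  apply strictConcaveOn_congr base
  intro x hx
  have absx : |x| < 1 := by rw [abs_lt]; exact ⟨by linarith [hx.1], hx.2⟩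
  simp only [Pi.add_apply]
  exact (split_tsum he1 absx).symm

theorem stmt14 (a b : ℝ) (ha : a ∈ Set.Ioc (0:ℝ) 1) (hb : b ∈ Set.Ioc (0:ℝ) 1) :
    ConcaveOn ℝ (Set.Ioo 0 1) (fun x => 1 / hyperF a b (a + b) x) ∧
      ∀ x ∈ Set.Ioo (0:ℝ) 1, ∀ y ∈ Set.Ioo (0:ℝ) 1,
        hyperF a b (a + b) ((x + y) / 2) ≤
            2 * hyperF a b (a + b) x * hyperF a b (a + b) y /
              (hyperF a b (a + b) x + hyperF a b (a + b) y) ∧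
          (hyperF a b (a + b) ((x + y) / 2) =
              2 * hyperF a b (a + b) x * hyperF a b (a + b) y /
                (hyperF a b (a + b) x + hyperF a b (a + b) y) ↔ x = y) := by
  obtain ⟨ha0, ha1⟩ := ha
  obtain ⟨hb0, hb1⟩ := hb
  set A := coA a b with hA
  set e := eco A with he
  have hA0 : A 0 = 1 := coA_zero
  have hApos : ∀ n, 0 < A n := coA_pos ha0 hb0
  have hArec : ∀ n, A (n + 1) = A n * rho a b n := coA_succ ha0 hb0
  have hrmono : Monotone (rho a b) := rho_mono ha0 hb0 ha1 hb1
  have hAle1 : ∀ n, A n ≤ 1 := coA_le_one ha0 hb0 ha1 hb1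
  have hAabs : ∀ n, |A n| ≤ 1 := fun n => abs_le.mpr ⟨by linarith [hApos n], hAle1 n⟩
  have henp : ∀ n, 1 ≤ n → e n ≤ 0 := kaluza hA0 hApos hArec hrmono
  have hebd : ∀ n, 1 ≤ n → -e n ≤ A n := eco_bound hA0 hApos hArec hrmono
  have heabs : ∀ n, |e n| ≤ 1 := by
    intro n
    obtain _ | m := n
    · rw [he, eco_zero A hA0]; norm_num
    · exact abs_le.mpr ⟨by linarith [hebd (m+1) (by omega), hAle1 (m+1)],
        by linarith [henp (m+1) (by omega)]⟩
  have he2 : e 2 < 0 := by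
    rw [he, eco_two hA0]
    have c1 : A 1 = rho a b 0 := by rw [hArec 0, hA0, one_mul]
    have c2 : A 2 = A 1 * rho a b 1 := hArec 1
    rw [c2, c1]
    nlinarith [rho_strict ha0 hb0 ha1 hb1, rho_pos ha0 hb0 0, rho_pos ha0 hb0 1]
  -- the hypergeometric function as a series in coA
  have hFdef : ∀ x : ℝ, hyperF a b (a + b) x = ∑' n, A n * x ^ n := fun x => rfl
  -- positivity of F on (0,1)
  have hFpos : ∀ x ∈ Set.Ioo (0:ℝ) 1, 1 ≤ hyperF a b (a + b) x := by
    intro x hx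
    have absx : |x| < 1 := by rw [abs_lt]; exact ⟨by linarith [hx.1], hx.2⟩
    rw [hFdef]
    have h1 : A 0 * x ^ 0 ≤ ∑' n, A n * x ^ n := by
      apply Summable.le_tsum (summ hAabs absx) 0
      intro j _
      have := hApos j
      have := hx.1
      positivity
    simpa [hA0] using h1
  -- 1/F equals the reciprocal series on (0,1)
  have hinv : ∀ x ∈ Set.Ioo (0:ℝ) 1, 1 / hyperF a b (a + b) x = ∑' n, e n * x ^ n := by
    intro x hx
    have absx : |x| < 1 := by rw [abs_lt]; exact ⟨by linarith [hx.1], hx.2⟩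
    have hp := prod_one hA0 hAabs heabs absx
    rw [← hFdef] at hp
    rw [mul_comm] at hp
    exact (eq_one_div_of_mul_eq_one_left hp).symm
  have henp2 : ∀ n, 2 ≤ n → e n ≤ 0 := fun n hn => henp n (by omega)
  have hstrict : StrictConcaveOn ℝ (Set.Ioo (0:ℝ) 1)
      (fun x => 1 / hyperF a b (a + b) x) := by
    apply strictConcaveOn_congr (strict_E heabs henp2 he2)
    intro x hx
    exact (hinv x hx).symm
  refine ⟨hstrict.concaveOn, ?_⟩
  intro x hx y hy
  have hm : (x + y) / 2 ∈ Set.Ioo (0:ℝ) 1 := by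
    constructor
    · have := hx.1; have := hy.1; linarith
    · have := hx.2; have := hy.2; linarith
  have hFx := hFpos x hx
  have hFy := hFpos y hy
  have hFm := hFpos _ hm
  by_cases hxy : x = y
  · subst hxy
    have hxx : (x + x) / 2 = x := by ring
    rw [hxx]
    have hden : hyperF a b (a + b) x + hyperF a b (a + b) x ≠ 0 := by linarith
    have hval : 2 * hyperF a b (a + b) x * hyperF a b (a + b) x /
        (hyperF a b (a + b) x + hyperF a b (a + b) x) = hyperF a b (a + b) x := by
      rw [div_eq_iff hden]; ring
    rw [hval]
    exact ⟨le_rfl, by simp⟩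
  · have hgt := hstrict.2 hx hy hxy (show (0:ℝ) < 1/2 by norm_num)
      (show (0:ℝ) < 1/2 by norm_num) (show (1:ℝ)/2 + 1/2 = 1 by norm_num)
    simp only [smul_eq_mul] at hgt
    have hmid : (1:ℝ)/2 * x + 1/2 * y = (x + y) / 2 := by ring
    rw [hmid] at hgt
    set Fx := hyperF a b (a + b) x
    set Fy := hyperF a b (a + b) y
    set Fm := hyperF a b (a + b) ((x + y) / 2)
    have hcomb : (1:ℝ)/2 * (1 / Fx) + 1/2 * (1 / Fy) = (Fx + Fy) / (2 * Fx * Fy) := by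
      field_simp
      ring
    rw [hcomb] at hgt
    have hFmpos : (0:ℝ) < Fm := by linarith
    have hden2 : (0:ℝ) < 2 * Fx * Fy := by nlinarith
    have hsum : (0:ℝ) < Fx + Fy := by linarith
    rw [div_lt_div_iff₀ hden2 hFmpos] at hgt
    have hlt : Fm < 2 * Fx * Fy / (Fx + Fy) := by
      rw [lt_div_iff₀ hsum]
      nlinarith [hgt]
    exact ⟨hlt.le, ⟨fun heq => absurd heq (ne_of_lt hlt), fun h => absurd h hxy⟩⟩
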